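/- A commutative ring A has the property that every prime ideal is maximal if and only if for any two distinct prime ideals 𝔭, 𝔮 of A there exist f ∈ A \ 𝔭 and g ∈ A \ 𝔮 with fg = 0. -/

import Mathlib

/-- If `p` is a minimal prime and `a ∈ p`, then `s * a ^ n = 0` for some `s ∉ p`. -/
lemma aux_min_prime_pow {A : Type*} [CommRing A] {p : Ideal A} [hp : p.IsPrime]
    (hmin : p ∈ minimalPrimes A) {a : A} (ha : a ∈ p) :
    ∃ s ∉ p, ∃ n : ℕ, s * a ^ n = 0 := by
  have hmem : algebraMap A (Localization p.primeCompl) a ∈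
      IsLocalRing.maximalIdeal (Localization p.primeCompl) :=
    (IsLocalization.AtPrime.to_map_mem_maximal_iff _ p a).mpr ha
  obtain ⟨n, hn⟩ :=
    (show IsNilpotent (algebraMap A (Localization p.primeCompl) a) by
      rw [← mem_nilradical, nilradical_eq_sInf, Submodule.mem_sInf]
      intro (J : Ideal (Localization p.primeCompl)) hJ
      have : J.IsPrime := hJ
      have hle : J.comap (algebraMap A (Localization p.primeCompl)) ≤ p :=
        (Ideal.comap_mono (IsLocalRing.le_maximalIdeal this.ne_top)).trans
          (IsLocalization.AtPrime.comap_maximalIdeal (Localization p.primeCompl) p).le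
      have h1 : J.comap (algebraMap A (Localization p.primeCompl)) = p :=
        le_antisymm hle (hmin.2 ⟨Ideal.comap_isPrime _ J, bot_le⟩ hle)
      have h2 := IsLocalization.map_comap p.primeCompl (Localization p.primeCompl) J
      change Ideal.map _ (J.comap (algebraMap A (Localization p.primeCompl))) = J at h2
      rw [h1, Localization.AtPrime.map_eq_maximalIdeal] at h2
      exact h2 ▸ hmem)
  rw [← map_pow] at hn
  obtain ⟨⟨s, hs⟩, hs0⟩ :=
    (IsLocalization.map_eq_zero_iff p.primeCompl (Localization p.primeCompl) _).mp hn
  exact ⟨s, hs, n, hs0⟩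

theorem primes_maximal_iff_annihilating_pairs (A : Type*) [CommRing A] :
    (∀ p : Ideal A, p.IsPrime → p.IsMaximal) ↔
      ∀ p q : Ideal A, p.IsPrime → q.IsPrime → p ≠ q →
        ∃ f ∉ p, ∃ g ∉ q, f * g = 0 := by
  constructor
  · intro H p q hp hq hpq
    have hmin : ∀ r : Ideal A, r.IsPrime → r ∈ minimalPrimes A := by
      intro r hr
      obtain ⟨r', hr', hle⟩ := Ideal.exists_minimalPrimes_le (J := r) (bot_le)
      have : r' = r := ((H r' hr'.1.1).eq_of_le hr.ne_top hle)
      rwa [← this]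
    haveI := hp; haveI := hq
    -- p + q = ⊤ since both maximal and distinct
    have hsup : p ⊔ q = ⊤ := (H p hp).coprime_of_ne (H q hq) hpq
    obtain ⟨a, ha, b, hb, hab⟩ := Submodule.mem_sup.mp (hsup ▸ Submodule.mem_top (x := (1 : A)))
    obtain ⟨s, hs, n, hsn⟩ := aux_min_prime_pow (hmin p hp) ha
    obtain ⟨t, ht, m, htm⟩ := aux_min_prime_pow (hmin q hq) hb
    refine ⟨s * b ^ m, ?_, t * a ^ n, ?_, ?_⟩
    · intro h
      rcases hp.mem_or_mem h with h | h
      · exact hs h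
      · have hbp : b ∉ p := fun hbp => hp.ne_top (p.eq_top_of_isUnit_mem
          (by rw [← hab]; exact Ideal.add_mem _ ha hbp) isUnit_one)
        exact hbp (hp.mem_of_pow_mem m h)
    · intro h
      rcases hq.mem_or_mem h with h | h
      · exact ht h
      · have haq : a ∉ q := fun haq => hq.ne_top (q.eq_top_of_isUnit_mem
          (by rw [← hab]; exact Ideal.add_mem _ haq hb) isUnit_one)
        exact haq (hq.mem_of_pow_mem n h)
    · calc s * b ^ m * (t * a ^ n) = (t * b ^ m) * (s * a ^ n) := by ring
        _ = 0 := by rw [hsn, mul_zero]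
  · intro H p hp
    haveI := hp
    obtain ⟨m, hm, hpm⟩ := p.exists_le_maximal hp.ne_top
    rcases eq_or_ne p m with rfl | hne
    · exact hm
    obtain ⟨f, hf, g, hg, hfg⟩ := H p m hp hm.isPrime hne
    exact absurd (hpm (((hp.mem_or_mem (hfg ▸ p.zero_mem)).resolve_left hf))) hg
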